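/- Let g: ℝ → ℝ be continuous such that for some R > 0, c₊ > 0, c₋ > 0, and ε > 0, one has g(r) ≤ −c₊ r^ε for r ≥ R and g(r) ≥ c₋|r|^ε for r ≤ −R. Then every solution of a'(r) = g(r)a(r) lies in L²(ℝ). -/

import Mathlib

open Real MeasureTheory Set

lemma expIntIic (k c : ℝ) (hk : 0 < k) :
    IntegrableOn (fun x : ℝ => Real.exp (k * x)) (Iic c) := by
  have h : IntegrableOn (fun x : ℝ => Real.exp (-k * x)) (Ioi (-c)) :=
    exp_neg_integrableOn_Ioi (-c) hk
  have h2 := (MeasurePreserving.integrableOn_comp_preimage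
      (Measure.measurePreserving_neg (volume : Measure ℝ))
      (Homeomorph.neg ℝ).measurableEmbedding).2 h
  have hset : (Neg.neg ⁻¹' Ioi (-c) : Set ℝ) = Iio c := by
    ext x; simp [neg_lt]
  rw [hset] at h2
  rw [integrableOn_Iic_iff_integrableOn_Iio]
  refine h2.congr_fun (fun x _ => ?_) measurableSet_Iio
  simp [Function.comp, neg_mul_neg]

/-- If the coefficient g decays like −c₊r^ε at +∞ and grows like c₋|r|^ε at −∞,
every solution of a' = g·a is square-integrable on ℝ. -/
theorem stmt12 (g : ℝ → ℝ) (hg : Continuous g) (R cp cm ε : ℝ)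
    (hR : 0 < R) (hcp : 0 < cp) (hcm : 0 < cm) (hε : 0 < ε)
    (hp : ∀ r : ℝ, R ≤ r → g r ≤ -cp * r ^ ε)
    (hmm : ∀ r : ℝ, r ≤ -R → cm * |r| ^ ε ≤ g r)
    (a : ℝ → ℂ) (hd : Differentiable ℝ a)
    (hode : ∀ r, deriv a r = ((g r : ℝ) : ℂ) * a r) :
    Integrable (fun r => ‖a r‖ ^ 2) := by
  set G : ℝ → ℝ := fun r => ∫ t in (0:ℝ)..r, g t with hGdef
  have hGd : ∀ r, HasDerivAt G (g r) r := fun r =>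
    (hg.integral_hasStrictDerivAt 0 r).hasDerivAt
  have hGc : Continuous G := by
    have : Differentiable ℝ G := fun r => (hGd r).differentiableAt
    exact this.continuous
  -- the solution formula
  have key : ∀ r, a r = a 0 * Complex.exp (G r) := by
    have h0 : G 0 = 0 := by simp [hGdef]
    set φ : ℝ → ℂ := fun r => a r * Complex.exp (-(G r : ℂ)) with hφdef
    have hφd : ∀ r, HasDerivAt φ 0 r := by
      intro r
      have h1 : HasDerivAt a (((g r : ℝ) : ℂ) * a r) r := by
        have := (hd r).hasDerivAt
        rwa [hode r] at this
      have h2 : HasDerivAt (fun s : ℝ => -((G s : ℝ) : ℂ)) (-((g r : ℝ) : ℂ)) r :=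
        ((hGd r).ofReal_comp).neg
      have h3 := h2.cexp
      have h4 := h1.mul h3
      have : (((g r : ℝ) : ℂ) * a r) * Complex.exp (-(G r : ℂ))
          + a r * (Complex.exp (-(G r : ℂ)) * -((g r : ℝ) : ℂ)) = 0 := by ring
      rw [this] at h4
      exact h4
    have hφdiff : Differentiable ℝ φ := fun r => (hφd r).differentiableAt
    have hφderiv : ∀ r, deriv φ r = 0 := fun r => (hφd r).deriv
    have hconst : ∀ r, φ r = φ 0 := fun r =>
      is_const_of_deriv_eq_zero hφdiff hφderiv r 0
    intro r
    have h := hconst r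
    have h0' : φ 0 = a 0 := by simp [hφdef, h0]
    rw [h0'] at h
    have := congrArg (fun z => z * Complex.exp ((G r : ℝ) : ℂ)) h
    simp only [hφdef] at this
    rwa [mul_assoc, ← Complex.exp_add, neg_add_cancel, Complex.exp_zero, mul_one] at this
  -- norm formula
  have hnorm : ∀ r, ‖a r‖ ^ 2 = ‖a 0‖ ^ 2 * Real.exp (2 * G r) := by
    intro r
    rw [key r, norm_mul, Complex.norm_exp,
      Complex.ofReal_re, mul_pow, ← Real.exp_nat_mul]
    norm_num
  have hGsub : ∀ x y : ℝ, G y - G x = ∫ t in x..y, g t := by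
    intro x y
    have := intervalIntegral.integral_add_adjacent_intervals
      (μ := volume) (hg.intervalIntegrable 0 x) (hg.intervalIntegrable x y)
    simp only [hGdef]
    linarith [this]
  -- upper bound at +∞
  have hub : ∀ r, R ≤ r → G r ≤ G R + (r - R) * (-(cp * R ^ ε)) := by
    intro r hr
    have h1 := hGsub R r
    have h2 : (∫ t in R..r, g t) ≤ ∫ t in R..r, (-(cp * R ^ ε)) := by
      apply intervalIntegral.integral_mono_on hr (hg.intervalIntegrable _ _)
        intervalIntegrable_const
      intro t ht
      have htR : R ≤ t := ht.1
      have hε1 : R ^ ε ≤ t ^ ε := Real.rpow_le_rpow hR.le htR hε.le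
      have := hp t htR
      nlinarith
    rw [intervalIntegral.integral_const, smul_eq_mul] at h2
    linarith
  -- upper bound at −∞
  have hlb : ∀ r, r ≤ -R → G r ≤ G (-R) + (-R - r) * (-(cm * R ^ ε)) := by
    intro r hr
    have h1 := hGsub r (-R)
    have h2 : (∫ t in r..(-R), (cm * R ^ ε)) ≤ ∫ t in r..(-R), g t := by
      apply intervalIntegral.integral_mono_on hr intervalIntegrable_const
        (hg.intervalIntegrable _ _)
      intro t ht
      have htR : t ≤ -R := ht.2
      have habs : R ≤ |t| := by
        rw [abs_of_nonpos (by linarith)]; linarith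
      have hε1 : R ^ ε ≤ |t| ^ ε := Real.rpow_le_rpow hR.le habs hε.le
      have := hmm t htR
      nlinarith
    rw [intervalIntegral.integral_const, smul_eq_mul] at h2
    linarith
  have hcont : Continuous fun r => ‖a r‖ ^ 2 := (hd.continuous.norm).pow 2
  -- integrability on the three pieces
  set kP : ℝ := 2 * (cp * R ^ ε) with hkP
  set kM : ℝ := 2 * (cm * R ^ ε) with hkM
  have hRε : 0 < R ^ ε := Real.rpow_pos_of_pos hR ε
  have hkPpos : 0 < kP := by positivity
  have hkMpos : 0 < kM := by positivity
  have hIci : IntegrableOn (fun r => ‖a r‖ ^ 2) (Ici R) := by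
    set C : ℝ := ‖a 0‖ ^ 2 * Real.exp (2 * G R + kP * R) with hC
    have hint : IntegrableOn (fun r => C * Real.exp (-kP * r)) (Ici R) := by
      rw [integrableOn_Ici_iff_integrableOn_Ioi]
      exact (exp_neg_integrableOn_Ioi R hkPpos).const_mul C
    refine Integrable.mono' hint (hcont.aestronglyMeasurable.restrict) ?_
    refine (ae_restrict_iff' measurableSet_Ici).2 (ae_of_all _ fun r hr => ?_)
    have hr' : R ≤ r := hr
    have hGb := hub r hr'
    have hexp : Real.exp (2 * G r) ≤ Real.exp (2 * G R + kP * R + (-kP * r)) := by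
      apply Real.exp_le_exp.2
      simp only [hkP]
      nlinarith
    rw [Real.norm_of_nonneg (by positivity), hnorm r]
    calc ‖a 0‖ ^ 2 * Real.exp (2 * G r)
        ≤ ‖a 0‖ ^ 2 * Real.exp (2 * G R + kP * R + (-kP * r)) := by
          exact mul_le_mul_of_nonneg_left hexp (by positivity)
      _ = C * Real.exp (-kP * r) := by rw [hC, Real.exp_add]; ring
  have hIic : IntegrableOn (fun r => ‖a r‖ ^ 2) (Iic (-R)) := by
    set C : ℝ := ‖a 0‖ ^ 2 * Real.exp (2 * G (-R) + kM * R) with hC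
    have hint : IntegrableOn (fun r => C * Real.exp (kM * r)) (Iic (-R)) :=
      (expIntIic kM (-R) hkMpos).const_mul C
    refine Integrable.mono' hint (hcont.aestronglyMeasurable.restrict) ?_
    refine (ae_restrict_iff' measurableSet_Iic).2 (ae_of_all _ fun r hr => ?_)
    have hr' : r ≤ -R := hr
    have hGb := hlb r hr'
    have hexp : Real.exp (2 * G r) ≤ Real.exp (2 * G (-R) + kM * R + kM * r) := by
      apply Real.exp_le_exp.2
      simp only [hkM]
      nlinarith
    rw [Real.norm_of_nonneg (by positivity), hnorm r]
    calc ‖a 0‖ ^ 2 * Real.exp (2 * G r)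
        ≤ ‖a 0‖ ^ 2 * Real.exp (2 * G (-R) + kM * R + kM * r) := by
          exact mul_le_mul_of_nonneg_left hexp (by positivity)
      _ = C * Real.exp (kM * r) := by rw [hC, Real.exp_add]; ring
  have hIcc : IntegrableOn (fun r => ‖a r‖ ^ 2) (Icc (-R) R) :=
    hcont.integrableOn_Icc
  rw [← integrableOn_univ]
  have hsub : (univ : Set ℝ) ⊆ Iic (-R) ∪ (Icc (-R) R ∪ Ici R) := by
    intro x _
    rcases le_total x (-R) with h | h
    · exact Or.inl h
    rcases le_total x R with h' | h'
    · exact Or.inr (Or.inl ⟨h, h'⟩)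
    · exact Or.inr (Or.inr h')
  exact (hIic.union (hIcc.union hIci)).mono_set hsub
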